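/- In the inductive construction of Proposition on the slow process, the constants C_y defined by C_M := 1 and C_y := (1/f(y))(1 - Σ_{y'=M}^{y-1} C_{y'} f(y)) for M+1 ≤ y ≤ N-1 are all strictly positive, where f is strictly decreasing and positive on {M,...,N-1}. -/

import Mathlib

open Finset

/-- The constants `C_y` of the slow inductive step, defined by `C_M = 1` and
`C_y = (1/f(y))(1 - Σ_{y'=M}^{y-1} C_{y'} f(y))` for `M+1 ≤ y ≤ N-1`, are
strictly positive, where `f` is strictly decreasing on `{M,...,N}` with
`f(M) = 1` and `f(N) = 0`. -/
theorem stmt14 (N M : ℕ) (hMN : M + 1 ≤ N) (f : ℕ → ℝ)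
    (hf : StrictAntiOn f (Set.Icc M N)) (hfM : f M = 1) (hfN : f N = 0)
    (C : ℕ → ℝ) (hCM : C M = 1)
    (hC : ∀ y, M + 1 ≤ y → y ≤ N - 1 →
      C y = (1 / f y) * (1 - ∑ y' ∈ Finset.Ico M y, C y' * f y)) :
    ∀ y, M ≤ y → y ≤ N - 1 → 0 < C y := by
  have hN0 : 0 < N := by omega
  have hfpos : ∀ z, M ≤ z → z ≤ N - 1 → 0 < f z := by
    intro z hz1 hz2
    have hzN : z < N := by omega
    have := hf ⟨hz1, hzN.le⟩ ⟨by omega, le_refl N⟩ hzN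
    linarith [this, hfN ▸ this]
  have key : ∀ y, M ≤ y → y ≤ N - 1 →
      0 < C y ∧ ∑ y' ∈ Finset.Ico M (y + 1), C y' = 1 / f y := by
    intro y hy
    induction y, hy using Nat.le_induction with
    | base =>
      intro _
      constructor
      · rw [hCM]; norm_num
      · rw [Finset.sum_Ico_succ_top (le_refl M), Finset.Ico_self, Finset.sum_empty,
          hCM, hfM]
        norm_num
    | succ y hy IH =>
      intro hy2
      have hyN : y ≤ N - 1 := by omega
      obtain ⟨hCpos, hsum⟩ := IH hyN
      have hfy : 0 < f y := hfpos y hy hyN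
      have hfy1 : 0 < f (y + 1) := hfpos (y + 1) (by omega) hy2
      have hlt : f (y + 1) < f y :=
        hf ⟨hy, by omega⟩ ⟨by omega, by omega⟩ (by omega)
      have hCval : C (y + 1) = 1 / f (y + 1) - 1 / f y := by
        rw [hC (y + 1) (by omega) hy2, ← Finset.sum_mul, hsum]
        field_simp
      have hpos : 0 < C (y + 1) := by
        rw [hCval]
        have := one_div_lt_one_div_of_lt hfy1 hlt
        linarith
      refine ⟨hpos, ?_⟩
      rw [Finset.sum_Ico_succ_top (by omega : M ≤ y + 1), hsum, hCval]
      ring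
  intro y hy1 hy2
  exact (key y hy1 hy2).1
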